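/- Let α be a real number and P(z) = Σ_{j=0}^m (a_j/b_j) z^j a polynomial with rational coefficients a_j/b_j in lowest terms, A = max_j |a_j|, B = lcm(|b_0|,…,|b_m|). If a positive integer q satisfies ‖qα‖ ≤ q^{-ν} ≤ 1 (distance to nearest integer), then ‖B q^m · P(α)‖ ≤ m²(1+|α|)^{m-1} · A B · q^{-ν+m-1}. -/

import Mathlib

lemma aux_pow_sub_pow (x y M : ℝ) (hx : |x| ≤ M) (hy : |y| ≤ M) (n : ℕ) :
    |x ^ n - y ^ n| ≤ n * M ^ (n - 1) * |x - y| := by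
  have hM : 0 ≤ M := le_trans (abs_nonneg x) hx
  induction n with
  | zero => simp
  | succ n ih =>
    have key : x ^ (n + 1) - y ^ (n + 1) = x ^ n * (x - y) + (x ^ n - y ^ n) * y := by ring
    calc |x ^ (n + 1) - y ^ (n + 1)| ≤ |x ^ n * (x - y)| + |(x ^ n - y ^ n) * y| := by
          rw [key]; exact abs_add_le _ _
      _ ≤ M ^ n * |x - y| + (n * M ^ (n - 1) * |x - y|) * M := by
          rw [abs_mul, abs_mul, abs_pow]
          gcongr
      _ ≤ (n + 1 : ℕ) * M ^ ((n + 1) - 1) * |x - y| := by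
          rcases Nat.eq_zero_or_pos n with rfl | hn
          · simp
          · have hMM : M ^ (n - 1) * M = M ^ n := by
              rw [← pow_succ]; congr 1; omega
            have : (n : ℝ) * M ^ (n - 1) * |x - y| * M = n * M ^ n * |x - y| := by
              rw [← hMM]; ring
            rw [Nat.add_sub_cancel, this]
            push_cast
            ring_nf
            nlinarith [abs_nonneg (x - y), pow_nonneg hM n]

theorem polynomial_linear_form_estimate
    (α : ℝ) (m : ℕ) (a : ℕ → ℤ) (b : ℕ → ℤ)
    (hb : ∀ j ≤ m, b j ≠ 0)
    (hcop : ∀ j ≤ m, Int.gcd (a j) (b j) = 1)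
    (A B : ℕ)
    (hA : A = (Finset.range (m + 1)).sup fun j => (a j).natAbs)
    (hB : B = (Finset.range (m + 1)).lcm fun j => (b j).natAbs)
    (q : ℕ) (hq : 0 < q) (ν : ℝ)
    (h1 : |(q : ℝ) * α - round ((q : ℝ) * α)| ≤ (q : ℝ) ^ (-ν))
    (h2 : (q : ℝ) ^ (-ν) ≤ 1) :
    |(B : ℝ) * (q : ℝ) ^ m * (∑ j ∈ Finset.range (m + 1), ((a j : ℝ) / (b j : ℝ)) * α ^ j) -
        round ((B : ℝ) * (q : ℝ) ^ m * (∑ j ∈ Finset.range (m + 1), ((a j : ℝ) / (b j : ℝ)) * α ^ j))| ≤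
      (m : ℝ) ^ 2 * (1 + |α|) ^ (m - 1) * (A : ℝ) * (B : ℝ) * (q : ℝ) ^ (-ν + (m : ℝ) - 1) := by
  set x : ℝ := (q : ℝ) * α with hx
  set p : ℤ := round x with hp
  have hqR : (1 : ℝ) ≤ (q : ℝ) := by exact_mod_cast hq
  have hqpos : (0 : ℝ) < (q : ℝ) := by positivity
  have habs : (1 : ℝ) ≤ 1 + |α| := le_add_of_nonneg_right (abs_nonneg α)
  set M : ℝ := (q : ℝ) * (1 + |α|) with hM
  have hxM : |x| ≤ M := by
    rw [hx, abs_mul, abs_of_nonneg hqpos.le, hM]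
    have : |α| ≤ 1 + |α| := by linarith
    nlinarith
  have hpM : |(p : ℝ)| ≤ M := by
    have h3 : |x - (p : ℝ)| ≤ 1 := h1.trans h2
    have : |(p : ℝ)| ≤ |x| + 1 := by
      have := abs_sub_abs_le_abs_sub (p : ℝ) x
      rw [abs_sub_comm] at h3
      linarith
    have hxq : |x| ≤ (q : ℝ) * |α| := by
      rw [hx, abs_mul, abs_of_nonneg hqpos.le]
    rw [hM]; nlinarith
  -- divisibility
  have hdvd : ∀ j ∈ Finset.range (m + 1), (b j) ∣ (B : ℤ) := by
    intro j hj
    have : (b j).natAbs ∣ B := hB ▸ Finset.dvd_lcm hj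
    exact (Int.natAbs_dvd).mp (Int.natCast_dvd_natCast.mpr this)
  set c : ℕ → ℤ := fun j => (B : ℤ) / b j with hc
  have hcb : ∀ j ∈ Finset.range (m + 1), c j * b j = (B : ℤ) := by
    intro j hj
    exact Int.ediv_mul_cancel (hdvd j hj)
  set N : ℤ := ∑ j ∈ Finset.range (m + 1), c j * a j * (q : ℤ) ^ (m - j) * p ^ j with hN
  have key : (B : ℝ) * (q : ℝ) ^ m * (∑ j ∈ Finset.range (m + 1), ((a j : ℝ) / (b j : ℝ)) * α ^ j)
      - (N : ℝ) = ∑ j ∈ Finset.range (m + 1),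
        (c j : ℝ) * (a j : ℝ) * (q : ℝ) ^ (m - j) * (x ^ j - (p : ℝ) ^ j) := by
    rw [hN, Finset.mul_sum]
    push_cast
    rw [← Finset.sum_sub_distrib]
    refine Finset.sum_congr rfl fun j hj => ?_
    have hjm : j ≤ m := by
      have := Finset.mem_range.mp hj; omega
    have hB' : (B : ℝ) = (c j : ℝ) * (b j : ℝ) := by exact_mod_cast (hcb j hj).symm
    have hqm : (q : ℝ) ^ m = (q : ℝ) ^ (m - j) * (q : ℝ) ^ j := by
      rw [← pow_add]; congr 1; omega
    have hbj : (b j : ℝ) ≠ 0 := Int.cast_ne_zero.mpr (hb j hjm)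
    rw [hB', hqm, hx]
    field_simp
    ring
  set D : ℝ := (A : ℝ) * (B : ℝ) * (1 + |α|) ^ (m - 1) * (q : ℝ) ^ (m - 1) * (q : ℝ) ^ (-ν) with hD
  have hDnn : 0 ≤ D := by
    rw [hD]
    have : (0:ℝ) ≤ (q : ℝ) ^ (-ν) := Real.rpow_nonneg hqpos.le _
    positivity
  have term_bound : ∀ j ∈ Finset.range (m + 1),
      |(c j : ℝ) * (a j : ℝ) * (q : ℝ) ^ (m - j) * (x ^ j - (p : ℝ) ^ j)| ≤ (j : ℝ) * D := by
    intro j hj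
    have hjm : j ≤ m := by have := Finset.mem_range.mp hj; omega
    rcases Nat.eq_zero_or_pos j with rfl | hj1
    · simp
    -- bounds on coefficients
    have hcB : |(c j : ℝ)| ≤ (B : ℝ) := by
      have hbj1 : (1 : ℝ) ≤ |(b j : ℝ)| := by
        have : (1 : ℤ) ≤ |b j| := Int.one_le_abs (hb j hjm)
        exact_mod_cast this
      have : |(c j : ℝ)| * |(b j : ℝ)| = (B : ℝ) := by
        rw [← abs_mul]
        have := hcb j hj
        rw [(by exact_mod_cast congrArg (Int.cast : ℤ → ℝ) this : (c j : ℝ) * (b j : ℝ) = (B : ℝ))]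
        exact abs_of_nonneg (Nat.cast_nonneg B)
      nlinarith [abs_nonneg ((c j : ℝ))]
    have haA : |(a j : ℝ)| ≤ (A : ℝ) := by
      have : (a j).natAbs ≤ A := hA ▸ Finset.le_sup (f := fun j => (a j).natAbs) hj
      have h8 : |a j| ≤ (A : ℤ) := by
        rw [Int.abs_eq_natAbs]; exact_mod_cast this
      exact_mod_cast h8
    have hpow := aux_pow_sub_pow x (p : ℝ) M hxM hpM j
    have hxp : |x - (p : ℝ)| ≤ (q : ℝ) ^ (-ν) := h1
    have hMnn : 0 ≤ M := le_trans (abs_nonneg x) hxM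
    have step1 : |(c j : ℝ) * (a j : ℝ) * (q : ℝ) ^ (m - j) * (x ^ j - (p : ℝ) ^ j)| ≤
        (B : ℝ) * (A : ℝ) * (q : ℝ) ^ (m - j) * ((j : ℝ) * M ^ (j - 1) * (q : ℝ) ^ (-ν)) := by
      rw [abs_mul, abs_mul, abs_mul, abs_pow, abs_of_nonneg hqpos.le]
      have h4 : |x ^ j - (p : ℝ) ^ j| ≤ (j : ℝ) * M ^ (j - 1) * (q : ℝ) ^ (-ν) := by
        calc |x ^ j - (p : ℝ) ^ j| ≤ (j : ℝ) * M ^ (j - 1) * |x - (p : ℝ)| := hpow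
          _ ≤ (j : ℝ) * M ^ (j - 1) * (q : ℝ) ^ (-ν) := by gcongr
      gcongr
    refine step1.trans ?_
    have hMexp : (q : ℝ) ^ (m - j) * M ^ (j - 1) = (q : ℝ) ^ (m - 1) * (1 + |α|) ^ (j - 1) := by
      rw [hM, mul_pow, ← mul_assoc, ← pow_add]
      congr 2
      omega
    have hpowle : (1 + |α|) ^ (j - 1) ≤ (1 + |α|) ^ (m - 1) :=
      pow_le_pow_right₀ habs (by omega)
    calc (B : ℝ) * (A : ℝ) * (q : ℝ) ^ (m - j) * ((j : ℝ) * M ^ (j - 1) * (q : ℝ) ^ (-ν))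
        = (j : ℝ) * ((A : ℝ) * (B : ℝ) * ((q : ℝ) ^ (m - j) * M ^ (j - 1)) * (q : ℝ) ^ (-ν)) := by
          ring
      _ = (j : ℝ) * ((A : ℝ) * (B : ℝ) * ((q : ℝ) ^ (m - 1) * (1 + |α|) ^ (j - 1)) * (q : ℝ) ^ (-ν)) := by
          rw [hMexp]
      _ ≤ (j : ℝ) * ((A : ℝ) * (B : ℝ) * ((q : ℝ) ^ (m - 1) * (1 + |α|) ^ (m - 1)) * (q : ℝ) ^ (-ν)) := by
          have hrnn : (0:ℝ) ≤ (q : ℝ) ^ (-ν) := Real.rpow_nonneg hqpos.le _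
          gcongr
      _ = (j : ℝ) * D := by rw [hD]; ring
  have sum_bound : |(B : ℝ) * (q : ℝ) ^ m * (∑ j ∈ Finset.range (m + 1), ((a j : ℝ) / (b j : ℝ)) * α ^ j)
      - (N : ℝ)| ≤ (∑ j ∈ Finset.range (m + 1), (j : ℝ)) * D := by
    rw [key, Finset.sum_mul]
    exact (Finset.abs_sum_le_sum_abs _ _).trans (Finset.sum_le_sum term_bound)
  have hround := round_le ((B : ℝ) * (q : ℝ) ^ m *
    (∑ j ∈ Finset.range (m + 1), ((a j : ℝ) / (b j : ℝ)) * α ^ j)) N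
  refine (hround.trans sum_bound).trans ?_
  -- final: (Σ j) * D ≤ m² (1+|α|)^(m-1) A B q^(-ν+m-1)
  rcases Nat.eq_zero_or_pos m with rfl | hm
  · simp [hD]
  have hsum : (∑ j ∈ Finset.range (m + 1), (j : ℝ)) ≤ (m : ℝ) ^ 2 := by
    have h5 : (∑ j ∈ Finset.range (m + 1), j) * 2 = (m + 1) * m :=
      Finset.sum_range_id_mul_two (m + 1)
    have h6 : ((∑ j ∈ Finset.range (m + 1), j : ℕ) : ℝ) = (∑ j ∈ Finset.range (m + 1), (j : ℝ)) := by
      push_cast; rfl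
    have h7 : (m + 1) * m ≤ 2 * m ^ 2 := by nlinarith
    have : ((∑ j ∈ Finset.range (m + 1), j : ℕ) : ℝ) * 2 ≤ 2 * (m : ℝ) ^ 2 := by
      exact_mod_cast (h5 ▸ h7 : (∑ j ∈ Finset.range (m + 1), j) * 2 ≤ 2 * m ^ 2)
    linarith [h6 ▸ this]
  have hrpow : (q : ℝ) ^ (m - 1 : ℕ) * (q : ℝ) ^ (-ν) = (q : ℝ) ^ (-ν + (m : ℝ) - 1) := by
    rw [← Real.rpow_natCast (q : ℝ) (m - 1), ← Real.rpow_add hqpos]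
    congr 1
    have : ((m - 1 : ℕ) : ℝ) = (m : ℝ) - 1 := by
      have : (1 : ℕ) ≤ m := hm
      push_cast [Nat.cast_sub this]; ring
    rw [this]; ring
  calc (∑ j ∈ Finset.range (m + 1), (j : ℝ)) * D ≤ (m : ℝ) ^ 2 * D := by gcongr
    _ = (m : ℝ) ^ 2 * (1 + |α|) ^ (m - 1) * (A : ℝ) * (B : ℝ) * (q : ℝ) ^ (-ν + (m : ℝ) - 1) := by
        rw [hD, ← hrpow]; ring
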